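/- (Proposition 'Weighted Majority: GTR Version', variance part.) For every integer h ≥ 1, every edge-weight assignment with τ_v > 0 for all nonempty v, and every unit flow Ψ: ∑_{x : V → Φ} P(x) S(x)² = 1 + K_Ψ, i.e., Var[S] = 1 + K_Ψ. -/

import Mathlib

open scoped BigOperators

/-- The matrix exponential of a real `Φ × Φ` matrix. -/
noncomputable def matExp {Φ : Type*} [Fintype Φ] [DecidableEq Φ] (A : Matrix Φ Φ ℝ) :
    Matrix Φ Φ ℝ := NormedSpace.exp A

/-- Sum of edge weights along the ancestor path of `v` (heap indexing of the binary
tree: vertices are positive integers, the root is `1`, and the parent of `v ≥ 2` is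
`v / 2`), stopping at (and excluding) the ancestor `a`.  This is `τ(a, v)`. -/
noncomputable def pathSum (τ : ℕ → ℝ) (a : ℕ) (v : ℕ) : ℝ :=
  if _h : v ≤ a then 0 else τ v + pathSum τ a (v / 2)
termination_by v
decreasing_by omega

/-- Lowest common ancestor (longest common prefix) of two same-level vertices in heap
indexing. -/
def lca (a b : ℕ) : ℕ :=
  if a = b then a else lca (a / 2) (b / 2)
termination_by a + b
decreasing_by omega

/-- Tree distance `τ(a,b) = τ(c,a) + τ(c,b)` where `c` is the longest common prefix of
the same-level vertices `a` and `b`. -/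
noncomputable def treeDist (τ : ℕ → ℝ) (a b : ℕ) : ℝ :=
  pathSum τ (lca a b) a + pathSum τ (lca a b) b

/-- Interpret a heap-index vertex `v ∈ {1, …, 2^{h+1} − 1}` of the complete binary tree
of depth `h` as an index into configurations (binary strings of length `m ≤ h`
correspond to the integers in `[2^m, 2^{m+1})`). -/
def idx (h v : ℕ) : Fin (2 ^ (h + 1) - 1) :=
  ⟨(v - 1) % (2 ^ (h + 1) - 1), Nat.mod_lt _ (by
    have : 2 ^ 1 ≤ 2 ^ (h + 1) := Nat.pow_le_pow_right (by norm_num) (by omega)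
    omega)⟩

/-- The GTR law on the complete binary tree of depth `h`: the probability
`P(x) = π(x_ρ) ∏_{v nonempty} (exp(τ_v Q))_{x_{parent(v)}, x_v}` of a configuration
`x` (configurations assign a state to each of the `2^{h+1} − 1` vertices). -/
noncomputable def gtrP {Φ : Type*} [Fintype Φ] [DecidableEq Φ]
    (h : ℕ) (π : Φ → ℝ) (Q : Matrix Φ Φ ℝ) (τ : ℕ → ℝ)
    (x : Fin (2 ^ (h + 1) - 1) → Φ) : ℝ :=
  π (x (idx h 1)) *
    ∏ v ∈ Finset.Ico 2 (2 ^ (h + 1)),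
      (matExp (τ v • Q)) (x (idx h (v / 2))) (x (idx h v))

/-- The estimator `S(x) = ∑_{ℓ leaf} Ψ(ℓ) ν_{x_ℓ} / Θ_{ρ,ℓ}` with `Θ_{ρ,ℓ} = e^{−τ(ρ,ℓ)}`. -/
noncomputable def estS {Φ : Type*} [Fintype Φ] [DecidableEq Φ]
    (h : ℕ) (ν : Φ → ℝ) (τ Ψ : ℕ → ℝ) (x : Fin (2 ^ (h + 1) - 1) → Φ) : ℝ :=
  ∑ ℓ ∈ Finset.Ico (2 ^ h) (2 ^ (h + 1)),
    Ψ ℓ * ν (x (idx h ℓ)) * Real.exp (pathSum τ 1 ℓ)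

/-- `K_Ψ = ∑_{v nonempty} (1 − e^{−2τ_v}) e^{2τ(ρ,v)} Ψ(v)²`. -/
noncomputable def Kflow (h : ℕ) (τ Ψ : ℕ → ℝ) : ℝ :=
  ∑ v ∈ Finset.Ico 2 (2 ^ (h + 1)),
    (1 - Real.exp (-(2 * τ v))) * Real.exp (2 * pathSum τ 1 v) * Ψ v ^ 2

/-- `Ψ` is a unit flow from the root to the leaves of the depth-`h` tree: nonnegative,
`Ψ(ρ) = 1`, and `Ψ(v) = Ψ(v0) + Ψ(v1)` for internal vertices. -/
def IsUnitFlow (h : ℕ) (Ψ : ℕ → ℝ) : Prop :=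
  Ψ 1 = 1 ∧ (∀ v, 1 ≤ v → v < 2 ^ (h + 1) → 0 ≤ Ψ v) ∧
    ∀ v, 1 ≤ v → v < 2 ^ h → Ψ v = Ψ (2 * v) + Ψ (2 * v + 1)

set_option linter.unusedTactic false
set_option linter.unreachableTactic false
set_option linter.unnecessarySeqFocus false

open scoped Matrix

lemma matExp_mulVec_eigen {Φ : Type*} [Fintype Φ] [DecidableEq Φ]
    (A : Matrix Φ Φ ℝ) (v : Φ → ℝ) (c : ℝ) (hv : A.mulVec v = c • v) :
    (matExp A).mulVec v = Real.exp c • v := by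
  letI : SeminormedRing (Matrix Φ Φ ℝ) := Matrix.linftyOpSemiNormedRing
  letI : NormedRing (Matrix Φ Φ ℝ) := Matrix.linftyOpNormedRing
  letI : NormedAlgebra ℝ (Matrix Φ Φ ℝ) := Matrix.linftyOpNormedAlgebra
  have hpow : ∀ n : ℕ, (A ^ n).mulVec v = (c ^ n) • v := by
    intro n
    induction n with
    | zero => simp [Matrix.one_mulVec]
    | succ n ih =>
      rw [pow_succ, ← Matrix.mulVec_mulVec, hv, Matrix.mulVec_smul, ih, smul_smul, pow_succ,
        mul_comm]
  have hsum : Summable fun n : ℕ => ((Nat.factorial n : ℝ)⁻¹) • A ^ n :=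
    NormedSpace.expSeries_summable' (𝕂 := ℝ) A
  let T : Matrix Φ Φ ℝ →L[ℝ] (Φ → ℝ) :=
    LinearMap.toContinuousLinearMap
      { toFun := fun M => M.mulVec v
        map_add' := fun M N => Matrix.add_mulVec M N v
        map_smul' := fun r M => Matrix.smul_mulVec r M v }
  have hT : (matExp A).mulVec v = T (NormedSpace.exp A) := rfl
  rw [hT, NormedSpace.exp_eq_tsum ℝ, T.map_tsum hsum]
  have : ∀ n : ℕ, T (((Nat.factorial n : ℝ)⁻¹) • A ^ n) = ((c ^ n / (Nat.factorial n : ℝ))) • v := by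
    intro n
    simp only [map_smul, T, LinearMap.coe_toContinuousLinearMap', LinearMap.coe_mk,
      AddHom.coe_mk, hpow, smul_smul, div_eq_inv_mul]
  simp_rw [this]
  rw [Summable.tsum_smul_const (Real.summable_pow_div_factorial c), Real.exp_eq_exp_ℝ]
  congr 1
  rw [NormedSpace.exp_eq_tsum ℝ]
  exact tsum_congr fun n => by rw [smul_eq_mul, div_eq_inv_mul]

section MatrixFacts

variable {Φ : Type*} [Fintype Φ] [DecidableEq Φ]
  {Q : Matrix Φ Φ ℝ} {π ν : Φ → ℝ}

lemma row_sum_one (hQrow : ∀ i, ∑ j : Φ, Q i j = 0) (t : ℝ) (i : Φ) :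
    ∑ c : Φ, matExp (t • Q) i c = 1 := by
  have h0 : (t • Q).mulVec (fun _ => (1:ℝ)) = (0:ℝ) • (fun _ => (1:ℝ)) := by
    funext i
    simp only [Matrix.mulVec, dotProduct, Matrix.smul_apply, smul_eq_mul, mul_one,
      zero_smul, Pi.zero_apply]
    rw [← Finset.mul_sum, hQrow i, mul_zero]
  have := congrFun (matExp_mulVec_eigen _ _ _ h0) i
  simp only [Matrix.mulVec, dotProduct, mul_one, Real.exp_zero, one_smul] at this
  exact this

lemma eig_sum (hν : Q.mulVec ν = -ν) (t : ℝ) (i : Φ) :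
    ∑ c : Φ, matExp (t • Q) i c * ν c = Real.exp (-t) * ν i := by
  have h0 : (t • Q).mulVec ν = (-t) • ν := by
    rw [Matrix.smul_mulVec, hν]
    funext j; simp
  have := congrFun (matExp_mulVec_eigen _ _ _ h0) i
  simp only [Matrix.mulVec, dotProduct, Pi.smul_apply, smul_eq_mul] at this
  exact this

lemma stat_sum (hrev : ∀ i j, π i * Q i j = π j * Q j i) (hQrow : ∀ i, ∑ j : Φ, Q i j = 0)
    (t : ℝ) (c : Φ) :
    ∑ i : Φ, π i * matExp (t • Q) i c = π c := by
  have htrans : (matExp (t • Q))ᵀ = matExp ((t • Q)ᵀ) := by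
    unfold matExp
    exact (Matrix.exp_transpose _).symm
  have h0 : ((t • Q)ᵀ).mulVec π = (0:ℝ) • π := by
    funext a
    simp only [Matrix.mulVec, dotProduct, Matrix.transpose_apply, Matrix.smul_apply,
      smul_eq_mul, zero_smul, Pi.zero_apply]
    have : ∀ i, t * Q i a * π i = t * (π a * Q a i) := by
      intro i; rw [mul_assoc, mul_comm (Q i a) (π i), hrev i a]
    rw [Finset.sum_congr rfl fun i _ => this i, ← Finset.mul_sum, ← Finset.mul_sum, hQrow a]
    all_goals ring
  have := congrFun (matExp_mulVec_eigen _ _ _ h0) c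
  simp only [Matrix.mulVec, dotProduct, Matrix.transpose_apply, Real.exp_zero,
    one_smul] at this
  rw [← htrans] at this
  simp only [Matrix.transpose_apply] at this
  rw [← this]
  exact Finset.sum_congr rfl fun i _ => mul_comm _ _

end MatrixFacts
lemma sum_elim {Φ : Type*} [Fintype Φ] [DecidableEq Φ] [Nonempty Φ] {N : ℕ}
    (j : Fin N) (F : (Fin N → Φ) → ℝ) (hF : ∀ x c, F (Function.update x j c) = F x)
    (G : (Fin N → Φ) → Φ → ℝ) (hG : ∀ x c d, G (Function.update x j c) d = G x d) :
    (Fintype.card Φ : ℝ) * ∑ x : Fin N → Φ, F x * G x (x j) =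
      ∑ x : Fin N → Φ, F x * ∑ c : Φ, G x c := by
  classical
  obtain ⟨c₀⟩ := ‹Nonempty Φ›
  set e := Equiv.funSplitAt j Φ with he
  have hsymm : ∀ (c : Φ) (y : {k : Fin N // k ≠ j} → Φ),
      e.symm (c, y) = Function.update (e.symm (c₀, y)) j c := by
    intro c y
    funext k
    by_cases hk : k = j
    · subst hk; simp [he, Equiv.funSplitAt, Equiv.piSplitAt]
    · simp [he, Equiv.funSplitAt, Equiv.piSplitAt, hk, Function.update_of_ne hk]
  have hj : ∀ (c : Φ) (y : {k : Fin N // k ≠ j} → Φ), e.symm (c, y) j = c := by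
    intro c y; rw [hsymm]; simp
  have key : ∀ (f : (Fin N → Φ) → ℝ), ∑ x : Fin N → Φ, f x =
      ∑ c : Φ, ∑ y : {k : Fin N // k ≠ j} → Φ, f (e.symm (c, y)) := by
    intro f
    rw [← Equiv.sum_comp e.symm f, Fintype.sum_prod_type]
  rw [key fun x => F x * G x (x j), key fun x => F x * ∑ c, G x c]
  have hFc : ∀ c y, F (e.symm (c, y)) = F (e.symm (c₀, y)) := fun c y => by rw [hsymm, hF]
  have hGc : ∀ c d y, G (e.symm (c, y)) d = G (e.symm (c₀, y)) d := fun c d y => by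
    rw [hsymm, hG]
  simp_rw [hj, hFc, fun c y => funext (hGc c · y)]
  conv_rhs => rw [Finset.sum_comm]
  conv_lhs => rw [Finset.sum_comm]
  rw [Finset.mul_sum]
  refine Finset.sum_congr rfl fun y _ => ?_
  rw [← Finset.mul_sum, Finset.sum_const, Finset.card_univ, nsmul_eq_mul]

lemma idx_ne {h u v : ℕ} (hu1 : 1 ≤ u) (hu2 : u < 2 ^ (h + 1)) (hv1 : 1 ≤ v)
    (hv2 : v < 2 ^ (h + 1)) (huv : u ≠ v) : idx h u ≠ idx h v := by
  intro hcon
  have hval := congrArg Fin.val hcon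
  simp only [idx] at hval
  have hp : 2 ≤ 2 ^ (h + 1) := by
    calc (2:ℕ) = 2 ^ 1 := by norm_num
    _ ≤ 2 ^ (h + 1) := Nat.pow_le_pow_right (by norm_num) (by omega)
  rw [Nat.mod_eq_of_lt (by omega), Nat.mod_eq_of_lt (by omega)] at hval
  omega

noncomputable def Tsum {Φ : Type*} [Fintype Φ] [DecidableEq Φ] (h : ℕ) (π : Φ → ℝ)
    (Q : Matrix Φ Φ ℝ) (τ : ℕ → ℝ) (n : ℕ) (f : (Fin (2 ^ (h + 1) - 1) → Φ) → ℝ) : ℝ :=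
  ∑ x : Fin (2 ^ (h + 1) - 1) → Φ,
    (π (x (idx h 1)) *
      ∏ v ∈ Finset.Ico 2 n, matExp (τ v • Q) (x (idx h (v / 2))) (x (idx h v))) * f x

lemma Tsum_congr {Φ : Type*} [Fintype Φ] [DecidableEq Φ] {h : ℕ} {π : Φ → ℝ}
    {Q : Matrix Φ Φ ℝ} {τ : ℕ → ℝ} {n : ℕ} {f g : (Fin (2 ^ (h + 1) - 1) → Φ) → ℝ}
    (hfg : ∀ x, f x = g x) : Tsum h π Q τ n f = Tsum h π Q τ n g := by
  unfold Tsum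
  exact Finset.sum_congr rfl fun x _ => by rw [hfg x]

section Prune

variable {Φ : Type*} [Fintype Φ] [DecidableEq Φ] (hΦ : Nonempty Φ)
  (π : Φ → ℝ) (Q : Matrix Φ Φ ℝ) (τ : ℕ → ℝ) {h : ℕ}

lemma prune [Nonempty Φ] {n : ℕ} (hn : 2 ≤ n) (hnN : n < 2 ^ (h + 1))
    (f : (Fin (2 ^ (h + 1) - 1) → Φ) → ℝ)
    (hf : ∀ x c, f (Function.update x (idx h n) c) = f x)
    (g w : Φ → ℝ) (κ : ℝ)
    (hg : ∀ i, ∑ c : Φ, matExp (τ n • Q) i c * g c = κ * w i) :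
    (Fintype.card Φ : ℝ) * Tsum h π Q τ (n + 1) (fun x => f x * g (x (idx h n))) =
      κ * Tsum h π Q τ n (fun x => f x * w (x (idx h (n / 2)))) := by
  classical
  set j := idx h n with hj
  set F : (Fin (2 ^ (h + 1) - 1) → Φ) → ℝ := fun x =>
    (π (x (idx h 1)) *
      ∏ v ∈ Finset.Ico 2 n, matExp (τ v • Q) (x (idx h (v / 2))) (x (idx h v))) * f x with hF
  set G : (Fin (2 ^ (h + 1) - 1) → Φ) → Φ → ℝ := fun x c =>
    matExp (τ n • Q) (x (idx h (n / 2))) c * g c with hG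
  have hupd : ∀ (x : Fin (2 ^ (h + 1) - 1) → Φ) (c : Φ) (u : ℕ), 1 ≤ u → u < n →
      Function.update x j c (idx h u) = x (idx h u) := by
    intro x c u hu1 hu2
    exact Function.update_of_ne (idx_ne hu1 (by omega) (by omega) hnN (by omega)) c x
  have hFupd : ∀ x c, F (Function.update x j c) = F x := by
    intro x c
    simp only [hF]
    rw [hf]
    congr 2
    · rw [hupd x c 1 (le_refl 1) (by omega)]
    · refine Finset.prod_congr rfl fun v hv => ?_
      simp only [Finset.mem_Ico] at hv
      rw [hupd x c v (by omega) (by omega), hupd x c (v / 2) (by omega) (by omega)]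
  have hGupd : ∀ x c d, G (Function.update x j c) d = G x d := by
    intro x c d
    simp only [hG]
    rw [hupd x c (n / 2) (by omega) (by omega)]
  have helim := sum_elim j F hFupd G hGupd
  have hstep1 : (Fintype.card Φ : ℝ) *
      Tsum h π Q τ (n + 1) (fun x => f x * g (x (idx h n))) =
      (Fintype.card Φ : ℝ) * ∑ x : Fin (2 ^ (h + 1) - 1) → Φ, F x * G x (x j) := by
    congr 1
    unfold Tsum
    refine Finset.sum_congr rfl fun x _ => ?_
    rw [Finset.prod_Ico_succ_top hn]
    simp only [hF, hG, hj]
    ring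
  rw [hstep1, helim]
  have hstep2 : ∀ x : Fin (2 ^ (h + 1) - 1) → Φ, (∑ c : Φ, G x c) = κ * w (x (idx h (n / 2))) := by
    intro x
    simp only [hG]
    exact hg _
  rw [Finset.sum_congr rfl fun x _ => by rw [hstep2 x]]
  unfold Tsum
  rw [Finset.mul_sum]
  refine Finset.sum_congr rfl fun x _ => ?_
  simp only [hF]
  ring

end Prune


/-- ancestor predicate, recursively -/
def ancB (c v : ℕ) : Bool :=
  if v ≤ c then v = c else ancB c (v / 2)
termination_by v
decreasing_by omega

def isAnc (c v : ℕ) : Prop := ancB c v = true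

instance (c v : ℕ) : Decidable (isAnc c v) := by unfold isAnc; infer_instance

noncomputable def tdist (τ : ℕ → ℝ) (a b : ℕ) : ℝ :=
  if a = b then 0 else if a < b then tdist τ a (b / 2) + τ b else tdist τ (a / 2) b + τ a
termination_by a + b
decreasing_by all_goals omega

lemma pathSum_self (τ : ℕ → ℝ) (a : ℕ) : pathSum τ a a = 0 := by
  rw [pathSum]; simp

lemma pathSum_step (τ : ℕ → ℝ) {a v : ℕ} (h : ¬ v ≤ a) :
    pathSum τ a v = τ v + pathSum τ a (v / 2) := by
  rw [pathSum]; simp [h]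

lemma isAnc_refl (c : ℕ) : isAnc c c := by
  unfold isAnc; rw [ancB]; simp

lemma isAnc_le {c v : ℕ} (h : isAnc c v) : c ≤ v := by
  unfold isAnc at h
  by_cases hv : v ≤ c
  · rw [ancB] at h; simp [hv] at h; omega
  · omega

lemma isAnc_of_le {c v : ℕ} (h : isAnc c v) (hv : v ≤ c) : v = c := by
  unfold isAnc at h; rw [ancB] at h; simp [hv] at h; exact h

lemma isAnc_step {c v : ℕ} (h : isAnc c (v / 2)) (hlt : c < v) : isAnc c v := by
  unfold isAnc at *; rw [ancB]; simp only [show ¬ v ≤ c by omega, if_false]; exact h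

lemma isAnc_down {c v : ℕ} (h : isAnc c v) (hne : v ≠ c) : isAnc c (v / 2) ∧ c < v := by
  have hle := isAnc_le h
  have hlt : c < v := by omega
  unfold isAnc at *
  rw [ancB] at h
  simp only [show ¬ v ≤ c by omega, if_false] at h
  exact ⟨h, hlt⟩

/-- characterization via division -/
lemma isAnc_iff_div {c : ℕ} (hc : 1 ≤ c) : ∀ v, isAnc c v ↔ ∃ k, v / 2 ^ k = c := by
  intro v
  induction v using Nat.strong_induction_on with
  | _ v ih =>
    by_cases hv : v ≤ c
    · constructor
      · intro h; exact ⟨0, by simpa using isAnc_of_le h hv⟩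
      · rintro ⟨k, hk⟩
        have : v / 2 ^ k ≤ v := Nat.div_le_self _ _
        have : v = c := by omega
        subst this; exact isAnc_refl v
    · have hv2 : v / 2 < v := by omega
      constructor
      · intro h
        obtain ⟨h1, _⟩ := isAnc_down h (by omega)
        obtain ⟨k, hk⟩ := (ih _ hv2).1 h1
        exact ⟨k + 1, by rw [pow_succ', ← Nat.div_div_eq_div_mul]; exact hk⟩
      · rintro ⟨k, hk⟩
        rcases k with _ | k
        · simp at hk; omega
        · refine isAnc_step ((ih _ hv2).2 ⟨k, ?_⟩) (by omega)
          rw [Nat.div_div_eq_div_mul, ← pow_succ']; exact hk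
-- level pinning: if v/2^k = c with both levels known, then d + k = L
lemma level_pin {c v d L k : ℕ} (hc1 : 2 ^ d ≤ c) (hc2 : c < 2 ^ (d + 1))
    (hv1 : 2 ^ L ≤ v) (hv2 : v < 2 ^ (L + 1)) (hk : v / 2 ^ k = c) : d + k = L := by
  have h2k : 0 < 2 ^ k := Nat.pow_pos (n := k) (by norm_num)
  have hle : 2 ^ d * 2 ^ k ≤ v := by
    rw [← hk] at hc1
    calc 2 ^ d * 2 ^ k ≤ v / 2 ^ k * 2 ^ k := Nat.mul_le_mul_right _ hc1
    _ ≤ v := Nat.div_mul_le_self v _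
  have hlt : v < 2 ^ (d + 1) * 2 ^ k := by
    rw [← hk] at hc2
    exact (Nat.div_lt_iff_lt_mul h2k).1 hc2
  rw [← pow_add] at hle hlt
  have h1 : 2 ^ (d + k) < 2 ^ (L + 1) := lt_of_le_of_lt hle hv2
  have h2 : 2 ^ L < 2 ^ (d + 1 + k) := lt_of_le_of_lt hv1 hlt
  have e1 : d + k < L + 1 := (Nat.pow_lt_pow_iff_right (by norm_num)).1 h1
  have e2 : L < d + 1 + k := (Nat.pow_lt_pow_iff_right (by norm_num)).1 h2
  omega

-- division interval characterization
lemma div_pow_eq_iff {v c k : ℕ} :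
    v / 2 ^ k = c ↔ c * 2 ^ k ≤ v ∧ v < (c + 1) * 2 ^ k := by
  have h2k : 0 < 2 ^ k := Nat.pow_pos (n := k) (by norm_num)
  constructor
  · rintro rfl
    exact ⟨Nat.div_mul_le_self v _, (Nat.div_lt_iff_lt_mul h2k).1 (by omega)⟩
  · rintro ⟨h1, h2⟩
    have hle : c ≤ v / 2 ^ k := (Nat.le_div_iff_mul_le h2k).2 h1
    have hlt : v / 2 ^ k < c + 1 := (Nat.div_lt_iff_lt_mul h2k).2 h2
    omega
lemma lca_self (a : ℕ) : lca a a = a := by rw [lca]; simp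

lemma lca_ne {a b : ℕ} (h : a ≠ b) : lca a b = lca (a / 2) (b / 2) := by
  rw [lca]; simp [h]

lemma tdist_self (τ : ℕ → ℝ) (a : ℕ) : tdist τ a a = 0 := by rw [tdist]; simp

lemma tdist_step_same_level {τ : ℕ → ℝ} {L a b : ℕ}
    (ha1 : 2 ^ (L + 1) ≤ a) (ha2 : a < 2 ^ (L + 2)) (hb1 : 2 ^ (L + 1) ≤ b)
    (hb2 : b < 2 ^ (L + 2)) (hne : a ≠ b) :
    tdist τ a b = tdist τ (a / 2) (b / 2) + τ a + τ b := by
  have e1 : 2 ^ (L + 2) = 2 ^ (L + 1) * 2 := by ring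
  have e2 : (1:ℕ) ≤ 2 ^ (L + 1) := Nat.one_le_two_pow
  rcases Nat.lt_or_ge a b with hab | hab
  · rw [tdist, if_neg hne, if_pos hab]
    have h1 : a ≠ b / 2 := by omega
    have h2 : ¬ a < b / 2 := by omega
    rw [tdist, if_neg h1, if_neg h2]
    all_goals ring
  · have hba : b < a := by omega
    rw [tdist, if_neg hne, if_neg (by omega)]
    have h1 : a / 2 ≠ b := by omega
    have h2 : a / 2 < b := by omega
    rw [tdist, if_neg h1, if_pos h2]
    all_goals ring

/-- lca spec for same-level vertices -/
lemma lca_spec : ∀ L a b : ℕ, 2 ^ L ≤ a → a < 2 ^ (L + 1) → 2 ^ L ≤ b → b < 2 ^ (L + 1) →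
    ∃ m, m ≤ L ∧ a / 2 ^ m = lca a b ∧ b / 2 ^ m = lca a b ∧
      ∀ k, a / 2 ^ k = b / 2 ^ k → m ≤ k := by
  intro L
  induction L with
  | zero =>
    intro a b ha1 ha2 hb1 hb2
    have : a = 1 ∧ b = 1 := by constructor <;> omega
    obtain ⟨rfl, rfl⟩ := this
    exact ⟨0, le_refl _, by simp [lca_self], by simp [lca_self], fun k _ => Nat.zero_le k⟩
  | succ L ih =>
    intro a b ha1 ha2 hb1 hb2
    have e1 : 2 ^ (L + 1) = 2 ^ L * 2 := by ring
    have e2 : (1:ℕ) ≤ 2 ^ L := Nat.one_le_two_pow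
    by_cases hab : a = b
    · subst hab
      exact ⟨0, Nat.zero_le _, by simp [lca_self], by simp [lca_self], fun k _ => Nat.zero_le k⟩
    · obtain ⟨m, hm, hma, hmb, hmin⟩ := ih (a / 2) (b / 2) (by omega) (by omega) (by omega)
        (by omega)
      refine ⟨m + 1, by omega, ?_, ?_, ?_⟩
      · rw [lca_ne hab, pow_succ', ← Nat.div_div_eq_div_mul]; exact hma
      · rw [lca_ne hab, pow_succ', ← Nat.div_div_eq_div_mul]; exact hmb
      · intro k hk
        rcases k with _ | k
        · simp at hk; omega
        · have : a / 2 / 2 ^ k = b / 2 / 2 ^ k := by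
            rw [Nat.div_div_eq_div_mul, Nat.div_div_eq_div_mul, ← pow_succ']; exact hk
          have := hmin k this
          omega

/-- tdist equals sum of pathSums to lca, for same-level vertices -/
lemma tdist_eq_pathSum (τ : ℕ → ℝ) :
    ∀ L a b : ℕ, 2 ^ L ≤ a → a < 2 ^ (L + 1) → 2 ^ L ≤ b → b < 2 ^ (L + 1) →
    tdist τ a b = pathSum τ (lca a b) a + pathSum τ (lca a b) b := by
  intro L
  induction L with
  | zero =>
    intro a b ha1 ha2 hb1 hb2
    have : a = 1 ∧ b = 1 := by constructor <;> omega
    obtain ⟨rfl, rfl⟩ := this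
    simp [tdist_self, lca_self, pathSum_self]
  | succ L ih =>
    intro a b ha1 ha2 hb1 hb2
    have e1 : 2 ^ (L + 1) = 2 ^ L * 2 := by ring
    have e2 : (1:ℕ) ≤ 2 ^ L := Nat.one_le_two_pow
    by_cases hab : a = b
    · subst hab; simp [tdist_self, lca_self, pathSum_self]
    · have hc : lca a b = lca (a / 2) (b / 2) := lca_ne hab
      obtain ⟨m, hm, hma, hmb, _⟩ := lca_spec L (a / 2) (b / 2) (by omega) (by omega) (by omega)
        (by omega)
      have hclt : lca (a / 2) (b / 2) ≤ a / 2 := by rw [← hma]; exact Nat.div_le_self _ _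
      have hclt' : lca (a / 2) (b / 2) ≤ b / 2 := by rw [← hmb]; exact Nat.div_le_self _ _
      have hstep := tdist_step_same_level (τ := τ) (L := L) ha1 ha2 hb1 hb2 hab
      rw [hstep, ih (a / 2) (b / 2) (by omega) (by omega) (by omega) (by omega), hc,
        pathSum_step τ (a := lca (a / 2) (b / 2)) (v := a) (by omega),
        pathSum_step τ (a := lca (a / 2) (b / 2)) (v := b) (by omega)]
      ring

/-- pathSum chain rule along ancestors -/
lemma pathSum_chain (τ : ℕ → ℝ) {c : ℕ} (hc : 1 ≤ c) :
    ∀ v, isAnc c v → pathSum τ 1 v = pathSum τ c v + pathSum τ 1 c := by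
  intro v
  induction v using Nat.strong_induction_on with
  | _ v ih =>
    intro h
    by_cases hv : v = c
    · subst hv; rw [pathSum_self]; ring
    · obtain ⟨h1, hlt⟩ := isAnc_down h hv
      have hv2 : v / 2 < v := by omega
      rw [pathSum_step τ (a := 1) (by omega), pathSum_step τ (a := c) (by omega),
        ih _ hv2 h1]
      ring

lemma nat_exists_level {v : ℕ} (hv : 1 ≤ v) : ∃ L, 2 ^ L ≤ v ∧ v < 2 ^ (L + 1) :=
  ⟨Nat.log 2 v, Nat.pow_log_le_self 2 (by omega), Nat.lt_pow_succ_log_self (by norm_num) v⟩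

lemma isAnc_one {v : ℕ} (hv : 1 ≤ v) : isAnc 1 v := by
  rw [isAnc_iff_div (le_refl 1)]
  obtain ⟨L, h1, h2⟩ := nat_exists_level hv
  exact ⟨L, div_pow_eq_iff.2 ⟨by omega, by omega⟩⟩

/-- C4: common ancestor iff ancestor of lca, same-level version -/
lemma isAnc_lca_iff {L a b w : ℕ} (hw : 1 ≤ w)
    (ha1 : 2 ^ L ≤ a) (ha2 : a < 2 ^ (L + 1)) (hb1 : 2 ^ L ≤ b) (hb2 : b < 2 ^ (L + 1)) :
    isAnc w (lca a b) ↔ (isAnc w a ∧ isAnc w b) := by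
  obtain ⟨m, hmL, hma, hmb, hmin⟩ := lca_spec L a b ha1 ha2 hb1 hb2
  constructor
  · intro h
    rw [isAnc_iff_div hw] at h
    obtain ⟨j, hj⟩ := h
    constructor
    · rw [isAnc_iff_div hw]
      exact ⟨m + j, by rw [pow_add, ← Nat.div_div_eq_div_mul, hma]; exact hj⟩
    · rw [isAnc_iff_div hw]
      exact ⟨m + j, by rw [pow_add, ← Nat.div_div_eq_div_mul, hmb]; exact hj⟩
  · rintro ⟨h1, h2⟩
    rw [isAnc_iff_div hw] at h1 h2
    obtain ⟨k, hk⟩ := h1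
    obtain ⟨k', hk'⟩ := h2
    obtain ⟨e, he1, he2⟩ := nat_exists_level hw
    have hkk : e + k = L := level_pin he1 he2 ha1 ha2 hk
    have hkk' : e + k' = L := level_pin he1 he2 hb1 hb2 hk'
    have : k = k' := by omega
    subst this
    have hmk : m ≤ k := hmin k (by rw [hk, hk'])
    rw [isAnc_iff_div hw]
    refine ⟨k - m, ?_⟩
    rw [← hma, Nat.div_div_eq_div_mul, ← pow_add]
    rw [show m + (k - m) = k by omega]
    exact hk

/-- C1: the set of leaves below c -/
lemma leaf_filter {h d c : ℕ} (hd : d ≤ h) (hc1 : 2 ^ d ≤ c) (hc2 : c < 2 ^ (d + 1)) :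
    (Finset.Ico (2 ^ h) (2 ^ (h + 1))).filter (fun ℓ => isAnc c ℓ) =
      Finset.Ico (c * 2 ^ (h - d)) ((c + 1) * 2 ^ (h - d)) := by
  have hc0 : 1 ≤ c := le_trans Nat.one_le_two_pow hc1
  ext ℓ
  simp only [Finset.mem_filter, Finset.mem_Ico]
  constructor
  · rintro ⟨⟨hl1, hl2⟩, hanc⟩
    rw [isAnc_iff_div hc0] at hanc
    obtain ⟨k, hk⟩ := hanc
    have : d + k = h := level_pin hc1 hc2 hl1 hl2 hk
    have : k = h - d := by omega
    subst this
    exact (div_pow_eq_iff.1 hk)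
  · rintro ⟨h1, h2⟩
    have hk : ℓ / 2 ^ (h - d) = c := div_pow_eq_iff.2 ⟨h1, h2⟩
    have hdh : d + (h - d) = h := by omega
    refine ⟨⟨?_, ?_⟩, (isAnc_iff_div hc0 ℓ).2 ⟨h - d, hk⟩⟩
    · calc 2 ^ h = 2 ^ d * 2 ^ (h - d) := by rw [← pow_add, hdh]
      _ ≤ c * 2 ^ (h - d) := Nat.mul_le_mul_right _ hc1
      _ ≤ ℓ := h1
    · calc ℓ < (c + 1) * 2 ^ (h - d) := h2
      _ ≤ 2 ^ (d + 1) * 2 ^ (h - d) := Nat.mul_le_mul_right _ (by omega)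
      _ = 2 ^ (h + 1) := by rw [← pow_add]; congr 1; omega

/-- C2: flow sums over descendant leaves -/
lemma flow_sum {h : ℕ} {Ψ : ℕ → ℝ} (hflow : ∀ v, 1 ≤ v → v < 2 ^ h → Ψ v = Ψ (2 * v) + Ψ (2 * v + 1)) :
    ∀ k v, 1 ≤ v → v * 2 ^ k < 2 ^ (h + 1) →
      ∑ ℓ ∈ Finset.Ico (v * 2 ^ k) ((v + 1) * 2 ^ k), Ψ ℓ = Ψ v := by
  intro k
  induction k with
  | zero => intro v hv1 hv2; simp
  | succ k ih =>
    intro v hv1 hv2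
    have hpk : (1:ℕ) ≤ 2 ^ k := Nat.one_le_two_pow
    have hsplit : v * 2 ^ (k + 1) = (2 * v) * 2 ^ k ∧ (v + 1) * 2 ^ (k + 1) = (2 * v + 2) * 2 ^ k := by
      constructor <;> ring
    have hmid : (2 * v) * 2 ^ k ≤ (2 * v + 1) * 2 ^ k := Nat.mul_le_mul_right _ (by omega)
    have hend : (2 * v + 1) * 2 ^ k ≤ (2 * v + 2) * 2 ^ k := Nat.mul_le_mul_right _ (by omega)
    rw [hsplit.1, hsplit.2, ← Finset.sum_Ico_consecutive _ hmid hend]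
    have h2v : (2 * v) * 2 ^ k < 2 ^ (h + 1) := by
      rw [← hsplit.1] at *; exact hv2
    have h2v1 : (2 * v + 1) * 2 ^ k < 2 ^ (h + 1) := by
      -- (2v+1)*2^k < (2v+2)*2^k = (v+1)*2^(k+1) ≤ 2^(h+1)
      have hk_le : k ≤ h := by
        have h3 : 2 ^ (k + 1) ≤ v * 2 ^ (k + 1) := Nat.le_mul_of_pos_left _ (by omega)
        have h4 : 2 ^ (k + 1) < 2 ^ (h + 1) := by omega
        have := (Nat.pow_lt_pow_iff_right (a := 2) (by norm_num)).1 h4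
        omega
      have hle : (v + 1) * 2 ^ (k + 1) ≤ 2 ^ (h + 1) := by
        have h1 : v < 2 ^ (h - k) := by
          by_contra hcon
          push_neg at hcon
          have hh : 2 ^ (h - k) * 2 ^ (k + 1) ≤ v * 2 ^ (k + 1) := Nat.mul_le_mul_right _ hcon
          rw [← pow_add, show h - k + (k + 1) = h + 1 by omega] at hh
          omega
        calc (v + 1) * 2 ^ (k + 1) ≤ 2 ^ (h - k) * 2 ^ (k + 1) := Nat.mul_le_mul_right _ (by omega)
        _ = 2 ^ (h + 1) := by rw [← pow_add]; congr 1; omega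
      have : (2 * v + 1) * 2 ^ k < (2 * v + 2) * 2 ^ k := by
        have : (2 * v + 1) * 2 ^ k + 2 ^ k = (2 * v + 2) * 2 ^ k := by ring
        omega
      rw [hsplit.2] at hle
      omega
    rw [ih (2 * v) (by omega) h2v, ih (2 * v + 1) (by omega) h2v1]
    have hvh : v < 2 ^ h := by
      by_contra hcon
      push_neg at hcon
      have h1 : 2 ^ h * 2 ^ (k + 1) ≤ v * 2 ^ (k + 1) := Nat.mul_le_mul_right _ hcon
      rw [← pow_add] at h1
      have h2 : 2 ^ (h + 1) ≤ 2 ^ (h + (k + 1)) := Nat.pow_le_pow_right (by norm_num) (by omega)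
      omega
    exact (hflow v hv1 hvh).symm

/-- C3: telescoping along the ancestor path -/
lemma telescope {h : ℕ} (τ : ℕ → ℝ) : ∀ u, 1 ≤ u → u < 2 ^ (h + 1) →
    ∑ v ∈ (Finset.Ico 2 (2 ^ (h + 1))).filter (fun v => isAnc v u),
      (Real.exp (2 * pathSum τ 1 v) - Real.exp (2 * pathSum τ 1 (v / 2)))
    = Real.exp (2 * pathSum τ 1 u) - 1 := by
  intro u
  induction u using Nat.strong_induction_on with
  | _ u ih =>
    intro hu1 huN
    by_cases hu : u = 1
    · subst hu
      have : (Finset.Ico 2 (2 ^ (h + 1))).filter (fun v => isAnc v 1) = ∅ := by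
        apply Finset.filter_false_of_mem
        intro v hv
        simp only [Finset.mem_Ico] at hv
        intro hanc
        have := isAnc_le hanc
        omega
      rw [this, Finset.sum_empty, pathSum_self]
      simp
    · have hu2 : 2 ≤ u := by omega
      have hins : (Finset.Ico 2 (2 ^ (h + 1))).filter (fun v => isAnc v u) =
          insert u ((Finset.Ico 2 (2 ^ (h + 1))).filter (fun v => isAnc v (u / 2))) := by
        ext v
        simp only [Finset.mem_insert, Finset.mem_filter, Finset.mem_Ico]
        constructor
        · rintro ⟨hv, hanc⟩
          by_cases hvu : v = u
          · exact Or.inl hvu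
          · exact Or.inr ⟨hv, (isAnc_down hanc (by omega)).1⟩
        · rintro (rfl | ⟨hv, hanc⟩)
          · exact ⟨⟨by omega, by omega⟩, isAnc_refl _⟩
          · have hle := isAnc_le hanc
            have : v < u := by omega
            exact ⟨hv, isAnc_step hanc this⟩
      have hnotmem : u ∉ (Finset.Ico 2 (2 ^ (h + 1))).filter (fun v => isAnc v (u / 2)) := by
        simp only [Finset.mem_filter, Finset.mem_Ico]
        rintro ⟨_, hanc⟩
        have := isAnc_le hanc
        omega
      rw [hins, Finset.sum_insert hnotmem, ih (u / 2) (by omega) (by omega) (by omega)]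
      ring

/-- Step 3: the flow-combinatorial identity -/
lemma step3 {h : ℕ} (τ Ψ : ℕ → ℝ) (hΨ1 : Ψ 1 = 1)
    (hflow : ∀ v, 1 ≤ v → v < 2 ^ h → Ψ v = Ψ (2 * v) + Ψ (2 * v + 1)) :
    ∑ ℓ ∈ Finset.Ico (2 ^ h) (2 ^ (h + 1)), ∑ ℓ' ∈ Finset.Ico (2 ^ h) (2 ^ (h + 1)),
      Ψ ℓ * Ψ ℓ' * Real.exp (2 * pathSum τ 1 (lca ℓ ℓ')) = 1 + Kflow h τ Ψ := by
  classical
  have hanc_sum : ∀ v, 2 ≤ v → v < 2 ^ (h + 1) →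
      ∑ ℓ ∈ Finset.Ico (2 ^ h) (2 ^ (h + 1)), (if isAnc v ℓ then Ψ ℓ else 0) = Ψ v := by
    intro v hv2 hvN
    rw [← Finset.sum_filter]
    obtain ⟨d, hd1, hd2⟩ := nat_exists_level (by omega : 1 ≤ v)
    have hdh : d ≤ h := by
      have h1 : 2 ^ d < 2 ^ (h + 1) := by omega
      have := (Nat.pow_lt_pow_iff_right (a := 2) (by norm_num)).1 h1
      omega
    rw [leaf_filter hdh hd1 hd2]
    refine flow_sum hflow (h - d) v (by omega) ?_
    calc v * 2 ^ (h - d) < 2 ^ (d + 1) * 2 ^ (h - d) :=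
          Nat.mul_lt_mul_of_lt_of_le hd2 (le_refl _) (Nat.pow_pos (by norm_num))
    _ = 2 ^ (h + 1) := by rw [← pow_add]; congr 1; omega
  have hleaf1 : ∑ ℓ ∈ Finset.Ico (2 ^ h) (2 ^ (h + 1)), Ψ ℓ = 1 := by
    have hfs := flow_sum hflow h 1 (le_refl 1) (by
      rw [one_mul]
      exact Nat.pow_lt_pow_succ (by norm_num))
    have h2 : (1 + 1) * 2 ^ h = 2 ^ (h + 1) := by rw [pow_succ]; ring
    rw [one_mul, h2, hΨ1] at hfs
    exact hfs
  have hpair : ∀ ℓ ∈ Finset.Ico (2 ^ h) (2 ^ (h + 1)), ∀ ℓ' ∈ Finset.Ico (2 ^ h) (2 ^ (h + 1)),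
      Ψ ℓ * Ψ ℓ' * Real.exp (2 * pathSum τ 1 (lca ℓ ℓ')) =
        Ψ ℓ * Ψ ℓ' + ∑ v ∈ Finset.Ico 2 (2 ^ (h + 1)),
          (if isAnc v ℓ ∧ isAnc v ℓ' then
            (Real.exp (2 * pathSum τ 1 v) - Real.exp (2 * pathSum τ 1 (v / 2))) else 0) *
            (Ψ ℓ * Ψ ℓ') := by
    intro ℓ hℓ ℓ' hℓ'
    simp only [Finset.mem_Ico] at hℓ hℓ'
    obtain ⟨m, hm, hma, hmb, _⟩ := lca_spec h ℓ ℓ' hℓ.1 hℓ.2 hℓ'.1 hℓ'.2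
    have hu1 : 1 ≤ lca ℓ ℓ' := by
      rw [← hma]
      have h1 : 2 ^ h / 2 ^ m ≤ ℓ / 2 ^ m := Nat.div_le_div_right hℓ.1
      rw [Nat.pow_div hm (by norm_num)] at h1
      have h2 : (1:ℕ) ≤ 2 ^ (h - m) := Nat.one_le_two_pow
      omega
    have huN : lca ℓ ℓ' < 2 ^ (h + 1) := by
      have h1 : lca ℓ ℓ' ≤ ℓ := by rw [← hma]; exact Nat.div_le_self _ _
      omega
    have htel := telescope τ (lca ℓ ℓ') hu1 huN
    have hfilt : (Finset.Ico 2 (2 ^ (h + 1))).filter (fun v => isAnc v (lca ℓ ℓ')) =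
        (Finset.Ico 2 (2 ^ (h + 1))).filter (fun v => isAnc v ℓ ∧ isAnc v ℓ') := by
      refine Finset.filter_congr fun v hv => ?_
      simp only [Finset.mem_Ico] at hv
      exact isAnc_lca_iff (by omega) hℓ.1 hℓ.2 hℓ'.1 hℓ'.2
    rw [hfilt, Finset.sum_filter] at htel
    have hEu : Real.exp (2 * pathSum τ 1 (lca ℓ ℓ')) =
        1 + ∑ v ∈ Finset.Ico 2 (2 ^ (h + 1)),
          (if isAnc v ℓ ∧ isAnc v ℓ' then
            (Real.exp (2 * pathSum τ 1 v) - Real.exp (2 * pathSum τ 1 (v / 2))) else 0) := by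
      rw [htel]; ring
    rw [hEu, mul_add, mul_one, Finset.mul_sum]
    congr 1
    exact Finset.sum_congr rfl fun v _ => by ring
  rw [Finset.sum_congr rfl fun ℓ hℓ => Finset.sum_congr rfl fun ℓ' hℓ' => hpair ℓ hℓ ℓ' hℓ']
  have hsplit : ∀ ℓ ∈ Finset.Ico (2 ^ h) (2 ^ (h + 1)),
      ∑ ℓ' ∈ Finset.Ico (2 ^ h) (2 ^ (h + 1)), (Ψ ℓ * Ψ ℓ' + ∑ v ∈ Finset.Ico 2 (2 ^ (h + 1)),
        (if isAnc v ℓ ∧ isAnc v ℓ' then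
          (Real.exp (2 * pathSum τ 1 v) - Real.exp (2 * pathSum τ 1 (v / 2))) else 0) *
          (Ψ ℓ * Ψ ℓ')) =
      (∑ ℓ' ∈ Finset.Ico (2 ^ h) (2 ^ (h + 1)), Ψ ℓ * Ψ ℓ') +
      ∑ ℓ' ∈ Finset.Ico (2 ^ h) (2 ^ (h + 1)), ∑ v ∈ Finset.Ico 2 (2 ^ (h + 1)),
        (if isAnc v ℓ ∧ isAnc v ℓ' then
          (Real.exp (2 * pathSum τ 1 v) - Real.exp (2 * pathSum τ 1 (v / 2))) else 0) *
          (Ψ ℓ * Ψ ℓ') := fun ℓ _ => Finset.sum_add_distrib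
  rw [Finset.sum_congr rfl hsplit, Finset.sum_add_distrib]
  congr 1
  · -- first part equals 1
    have : ∀ ℓ ∈ Finset.Ico (2 ^ h) (2 ^ (h + 1)),
        ∑ ℓ' ∈ Finset.Ico (2 ^ h) (2 ^ (h + 1)), Ψ ℓ * Ψ ℓ' = Ψ ℓ := by
      intro ℓ _
      rw [← Finset.mul_sum, hleaf1, mul_one]
    rw [Finset.sum_congr rfl this, hleaf1]
  · -- second part equals Kflow
    rw [Finset.sum_congr rfl fun ℓ _ => Finset.sum_comm, Finset.sum_comm]
    unfold Kflow
    refine Finset.sum_congr rfl fun v hv => ?_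
    simp only [Finset.mem_Ico] at hv
    have hterm : ∀ ℓ ℓ' : ℕ,
        (if isAnc v ℓ ∧ isAnc v ℓ' then
          (Real.exp (2 * pathSum τ 1 v) - Real.exp (2 * pathSum τ 1 (v / 2))) else 0) *
          (Ψ ℓ * Ψ ℓ') =
        (if isAnc v ℓ then Ψ ℓ else 0) * ((if isAnc v ℓ' then Ψ ℓ' else 0) *
          (Real.exp (2 * pathSum τ 1 v) - Real.exp (2 * pathSum τ 1 (v / 2)))) := by
      intro ℓ ℓ'
      by_cases h1 : isAnc v ℓ <;> by_cases h2 : isAnc v ℓ' <;> simp [h1, h2] <;> ring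
    rw [Finset.sum_congr rfl fun ℓ _ => Finset.sum_congr rfl fun ℓ' _ => hterm ℓ ℓ']
    have hinner : ∀ ℓ ∈ Finset.Ico (2 ^ h) (2 ^ (h + 1)),
        ∑ ℓ' ∈ Finset.Ico (2 ^ h) (2 ^ (h + 1)),
          (if isAnc v ℓ then Ψ ℓ else 0) * ((if isAnc v ℓ' then Ψ ℓ' else 0) *
            (Real.exp (2 * pathSum τ 1 v) - Real.exp (2 * pathSum τ 1 (v / 2)))) =
        (if isAnc v ℓ then Ψ ℓ else 0) * (Ψ v *
          (Real.exp (2 * pathSum τ 1 v) - Real.exp (2 * pathSum τ 1 (v / 2)))) := by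
      intro ℓ _
      rw [← Finset.mul_sum, ← Finset.sum_mul, hanc_sum v hv.1 hv.2]
    rw [Finset.sum_congr rfl hinner, ← Finset.sum_mul, hanc_sum v hv.1 hv.2]
    have hps : pathSum τ 1 v = τ v + pathSum τ 1 (v / 2) := pathSum_step τ (by omega)
    have hhalf : (2:ℝ) * pathSum τ 1 (v / 2) = 2 * pathSum τ 1 v + (-(2 * τ v)) := by
      rw [hps]; ring
    rw [hhalf, Real.exp_add]
    ring

lemma tdist_self' (τ : ℕ → ℝ) (a : ℕ) : tdist τ a a = 0 := by rw [tdist]; simp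

lemma tdist_to_parent (τ : ℕ → ℝ) {n b : ℕ} (hb : b < n) :
    tdist τ n b = tdist τ (n / 2) b + τ n := by
  rw [tdist, if_neg (by omega), if_neg (by omega)]

lemma tdist_symm (τ : ℕ → ℝ) : ∀ a b, tdist τ a b = tdist τ b a := by
  have H : ∀ s a b, a + b ≤ s → tdist τ a b = tdist τ b a := by
    intro s
    induction s with
    | zero =>
      intro a b hs
      have : a = 0 ∧ b = 0 := by omega
      simp [this.1, this.2]
    | succ s ih =>
      intro a b hs
      by_cases hab : a = b
      · subst hab; rfl
      · rcases Nat.lt_or_ge a b with hlt | hge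
        · rw [tdist, if_neg hab, if_pos hlt]
          conv_rhs => rw [tdist]
          rw [if_neg (show ¬ b = a by omega), if_neg (show ¬ b < a by omega),
            ih a (b / 2) (by omega)]
        · have hba : b < a := by omega
          rw [tdist, if_neg hab, if_neg (by omega)]
          conv_rhs => rw [tdist]
          rw [if_neg (show ¬ b = a by omega), if_pos hba, ih (a / 2) b (by omega)]
  exact fun a b => H (a + b) a b (le_refl _)

section Main

variable {Φ : Type*} [Fintype Φ] [DecidableEq Φ]
  (π : Φ → ℝ) (Q : Matrix Φ Φ ℝ) (τ : ℕ → ℝ) (ν : Φ → ℝ) {h : ℕ}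

lemma L1 (hcard : 2 ≤ Fintype.card Φ)
    (hrow : ∀ (t : ℝ) (i : Φ), ∑ c : Φ, matExp (t • Q) i c = 1)
    (hstat : ∀ (t : ℝ) (c : Φ), ∑ i : Φ, π i * matExp (t • Q) i c = π c) :
    ∀ n, 2 ≤ n → n ≤ 2 ^ (h + 1) → ∀ a, 1 ≤ a → a < n → ∀ f : Φ → ℝ,
      Tsum h π Q τ n (fun x => f (x (idx h a))) =
        (Fintype.card Φ : ℝ) ^ (2 ^ (h + 1) - n) * ∑ i : Φ, π i * f i := by
  have hΦ : Nonempty Φ := Fintype.card_pos_iff.1 (by omega)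
  have hc0 : (Fintype.card Φ : ℝ) ≠ 0 := by
    have : 0 < Fintype.card Φ := by omega
    positivity
  have hp2 : 2 ≤ 2 ^ (h + 1) := by
    calc (2:ℕ) = 2 ^ 1 := by norm_num
    _ ≤ 2 ^ (h + 1) := Nat.pow_le_pow_right (by norm_num) (by omega)
  intro n hn2
  induction n, hn2 using Nat.le_induction with
  | base =>
    intro _ a ha1 ha2 f
    have ha : a = 1 := by omega
    subst ha
    classical
    set j := idx h 1 with hj
    have helim := sum_elim (Φ := Φ) j (fun _ => 1) (fun _ _ => rfl)
      (fun _ c => π c * f c) (fun _ _ _ => rfl)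
    simp only [one_mul] at helim
    have hT : Tsum h π Q τ 2 (fun x => f (x (idx h 1))) =
        ∑ x : Fin (2 ^ (h + 1) - 1) → Φ, π (x j) * f (x j) := by
      unfold Tsum
      refine Finset.sum_congr rfl fun x _ => ?_
      rw [Finset.Ico_self, Finset.prod_empty, mul_one]
    have hconst : ∑ _x : Fin (2 ^ (h + 1) - 1) → Φ, (∑ i : Φ, π i * f i) =
        (Fintype.card Φ : ℝ) ^ (2 ^ (h + 1) - 1) * ∑ i : Φ, π i * f i := by
      rw [Finset.sum_const, Finset.card_univ, Fintype.card_fun, Fintype.card_fin,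
        nsmul_eq_mul, Nat.cast_pow]
    rw [hconst] at helim
    apply mul_left_cancel₀ hc0
    rw [hT, helim]
    rw [show 2 ^ (h + 1) - 1 = (2 ^ (h + 1) - 2) + 1 by omega, pow_succ']
    ring
  | succ n hn2 ih =>
    intro hle a ha1 ha2 f
    have hnN : n < 2 ^ (h + 1) := by omega
    by_cases han : a = n
    · subst han
      classical
      set w : Φ → ℝ := fun i => ∑ c : Φ, matExp (τ a • Q) i c * f c with hw
      have hp := prune π Q τ (h := h) hn2 hnN (fun _ => (1:ℝ)) (fun _ _ => rfl)
        f w 1 (fun i => by rw [one_mul])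
      have e1 : Tsum h π Q τ (a + 1) (fun x => (1:ℝ) * f (x (idx h a))) =
          Tsum h π Q τ (a + 1) (fun x => f (x (idx h a))) := Tsum_congr fun x => one_mul _
      have e2 : Tsum h π Q τ a (fun x => (1:ℝ) * w (x (idx h (a / 2)))) =
          Tsum h π Q τ a (fun x => w (x (idx h (a / 2)))) := Tsum_congr fun x => one_mul _
      rw [e1, e2, one_mul] at hp
      have hihw := ih (by omega) (a / 2) (by omega) (by omega) w
      have hπw : ∑ i : Φ, π i * w i = ∑ i : Φ, π i * f i := by
        simp only [hw]
        calc ∑ i : Φ, π i * ∑ c : Φ, matExp (τ a • Q) i c * f c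
            = ∑ i : Φ, ∑ c : Φ, π i * matExp (τ a • Q) i c * f c := by
              refine Finset.sum_congr rfl fun i _ => ?_
              rw [Finset.mul_sum]
              exact Finset.sum_congr rfl fun c _ => by ring
          _ = ∑ c : Φ, ∑ i : Φ, π i * matExp (τ a • Q) i c * f c := Finset.sum_comm
          _ = ∑ c : Φ, π c * f c := by
              refine Finset.sum_congr rfl fun c _ => ?_
              rw [← Finset.sum_mul, hstat (τ a) c]
      apply mul_left_cancel₀ hc0
      rw [hp, hihw, hπw, show 2 ^ (h + 1) - a = (2 ^ (h + 1) - (a + 1)) + 1 by omega, pow_succ']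
      ring
    · have hne : idx h a ≠ idx h n := idx_ne ha1 (by omega) (by omega) (by omega) (by omega)
      have hp := prune π Q τ (h := h) hn2 hnN (fun x => f (x (idx h a)))
        (fun x c => congrArg f (Function.update_of_ne hne c x))
        (fun _ => 1) (fun _ => 1) 1 (fun i => by simpa using hrow (τ n) i)
      have e1 : Tsum h π Q τ (n + 1) (fun x => f (x (idx h a)) * 1) =
          Tsum h π Q τ (n + 1) (fun x => f (x (idx h a))) := Tsum_congr fun x => mul_one _
      have e2 : Tsum h π Q τ n (fun x => f (x (idx h a)) * 1) =
          Tsum h π Q τ n (fun x => f (x (idx h a))) := Tsum_congr fun x => mul_one _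
      rw [e1, e2, one_mul] at hp
      apply mul_left_cancel₀ hc0
      rw [hp, ih (by omega) a ha1 (by omega) f,
        show 2 ^ (h + 1) - n = (2 ^ (h + 1) - (n + 1)) + 1 by omega, pow_succ']
      ring

lemma ML (hcard : 2 ≤ Fintype.card Φ)
    (hrow : ∀ (t : ℝ) (i : Φ), ∑ c : Φ, matExp (t • Q) i c = 1)
    (hstat : ∀ (t : ℝ) (c : Φ), ∑ i : Φ, π i * matExp (t • Q) i c = π c)
    (heig : ∀ (t : ℝ) (i : Φ), ∑ c : Φ, matExp (t • Q) i c * ν c = Real.exp (-t) * ν i)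
    (hnorm2 : ∑ i : Φ, π i * (ν i * ν i) = 1) :
    ∀ n, 2 ≤ n → n ≤ 2 ^ (h + 1) → ∀ a b, 1 ≤ a → 1 ≤ b → a < n → b < n → a ≠ b →
      Tsum h π Q τ n (fun x => ν (x (idx h a)) * ν (x (idx h b))) =
        (Fintype.card Φ : ℝ) ^ (2 ^ (h + 1) - n) * Real.exp (-(tdist τ a b)) := by
  have hΦ : Nonempty Φ := Fintype.card_pos_iff.1 (by omega)
  have hc0 : (Fintype.card Φ : ℝ) ≠ 0 := by
    have : 0 < Fintype.card Φ := by omega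
    positivity
  intro n hn2
  induction n, hn2 using Nat.le_induction with
  | base =>
    intro _ a b ha1 hb1 ha2 hb2 hab
    omega
  | succ n hn2 ih =>
    intro hle a b ha1 hb1 ha2 hb2 hab
    have hnN : n < 2 ^ (h + 1) := by omega
    have main : ∀ a b : ℕ, 1 ≤ b → b < n → a = n →
        Tsum h π Q τ (n + 1) (fun x => ν (x (idx h a)) * ν (x (idx h b))) =
          (Fintype.card Φ : ℝ) ^ (2 ^ (h + 1) - (n + 1)) * Real.exp (-(tdist τ a b)) := by
      intro a b hb1 hb2 han
      subst han
      have hneb : idx h b ≠ idx h a := idx_ne hb1 (by omega) (by omega) (by omega) (by omega)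
      have hp := prune π Q τ (h := h) hn2 hnN (fun x => ν (x (idx h b)))
        (fun x c => congrArg ν (Function.update_of_ne hneb c x))
        ν ν (Real.exp (-(τ a))) (fun i => heig (τ a) i)
      have e1 : Tsum h π Q τ (a + 1) (fun x => ν (x (idx h b)) * ν (x (idx h a))) =
          Tsum h π Q τ (a + 1) (fun x => ν (x (idx h a)) * ν (x (idx h b))) :=
        Tsum_congr fun x => mul_comm _ _
      rw [e1] at hp
      have htd : tdist τ a b = tdist τ (a / 2) b + τ a := tdist_to_parent τ hb2
      by_cases hpb : a / 2 = b
      · have hinner : Tsum h π Q τ a (fun x => ν (x (idx h b)) * ν (x (idx h (a / 2)))) =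
            (Fintype.card Φ : ℝ) ^ (2 ^ (h + 1) - a) * 1 := by
          rw [hpb]
          have := L1 π Q τ (h := h) hcard hrow hstat a hn2 (by omega) b hb1 hb2
            (fun i => ν i * ν i)
          rw [this, hnorm2]
        apply mul_left_cancel₀ hc0
        rw [hp, hinner, htd, hpb, tdist_self', zero_add,
          show 2 ^ (h + 1) - a = (2 ^ (h + 1) - (a + 1)) + 1 by omega, pow_succ']
        ring
      · have e2 : Tsum h π Q τ a (fun x => ν (x (idx h b)) * ν (x (idx h (a / 2)))) =
            Tsum h π Q τ a (fun x => ν (x (idx h (a / 2))) * ν (x (idx h b))) :=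
          Tsum_congr fun x => mul_comm _ _
        have hihm := ih (by omega) (a / 2) b (by omega) hb1 (by omega) hb2 hpb
        apply mul_left_cancel₀ hc0
        rw [hp, e2, hihm, htd,
          show 2 ^ (h + 1) - a = (2 ^ (h + 1) - (a + 1)) + 1 by omega, pow_succ',
          neg_add, Real.exp_add]
        ring
    by_cases han : a = n
    · exact main a b hb1 (by omega) han
    · by_cases hbn : b = n
      · have e0 : Tsum h π Q τ (n + 1) (fun x => ν (x (idx h a)) * ν (x (idx h b))) =
            Tsum h π Q τ (n + 1) (fun x => ν (x (idx h b)) * ν (x (idx h a))) :=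
          Tsum_congr fun x => mul_comm _ _
        rw [e0, main b a ha1 (by omega) hbn, tdist_symm τ b a]
      · have hnea : idx h a ≠ idx h n := idx_ne ha1 (by omega) (by omega) (by omega) (by omega)
        have hneb : idx h b ≠ idx h n := idx_ne hb1 (by omega) (by omega) (by omega) (by omega)
        have hp := prune π Q τ (h := h) hn2 hnN
          (fun x => ν (x (idx h a)) * ν (x (idx h b)))
          (fun x c => by
            simp only [Function.update_of_ne hnea, Function.update_of_ne hneb])
          (fun _ => 1) (fun _ => 1) 1 (fun i => by simpa using hrow (τ n) i)
        have e1 : Tsum h π Q τ (n + 1) (fun x => (ν (x (idx h a)) * ν (x (idx h b))) * 1) =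
            Tsum h π Q τ (n + 1) (fun x => ν (x (idx h a)) * ν (x (idx h b))) :=
          Tsum_congr fun x => mul_one _
        have e2 : Tsum h π Q τ n (fun x => (ν (x (idx h a)) * ν (x (idx h b))) * 1) =
            Tsum h π Q τ n (fun x => ν (x (idx h a)) * ν (x (idx h b))) :=
          Tsum_congr fun x => mul_one _
        rw [e1, e2, one_mul] at hp
        apply mul_left_cancel₀ hc0
        rw [hp, ih (by omega) a b ha1 hb1 (by omega) (by omega) hab,
          show 2 ^ (h + 1) - n = (2 ^ (h + 1) - (n + 1)) + 1 by omega, pow_succ']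
        ring

end Main


/-- (Weighted Majority: GTR Version, variance part.) For every depth `h ≥ 1`, positive
edge weights, and unit flow `Ψ`: `E[S²] = Var[S] = 1 + K_Ψ`. -/
theorem weighted_majority_variance {Φ : Type*} [Fintype Φ] [DecidableEq Φ]
    (hcard : 2 ≤ Fintype.card Φ)
    (Q : Matrix Φ Φ ℝ) (π ν : Φ → ℝ)
    (hQoff : ∀ i j, i ≠ j → 0 < Q i j)
    (hQrow : ∀ i, ∑ j : Φ, Q i j = 0)
    (hπpos : ∀ i, 0 < π i)
    (hπsum : ∑ i : Φ, π i = 1)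
    (hrev : ∀ i j, π i * Q i j = π j * Q j i)
    (hν : Q.mulVec ν = -ν)
    (hnorm : ∑ i : Φ, π i * ν i ^ 2 = 1) :
    ∀ h : ℕ, 1 ≤ h →
    ∀ τ : ℕ → ℝ, (∀ v, 2 ≤ v → v < 2 ^ (h + 1) → 0 < τ v) →
    ∀ Ψ : ℕ → ℝ, IsUnitFlow h Ψ →
      ∑ x : Fin (2 ^ (h + 1) - 1) → Φ, gtrP h π Q τ x * (estS h ν τ Ψ x) ^ 2 =
        1 + Kflow h τ Ψ := by
  intro h hh τ _hτ Ψ hΨ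
  classical
  obtain ⟨hΨ1, _hΨpos, hΨflow⟩ := hΨ
  have hrow : ∀ (t : ℝ) (i : Φ), ∑ c : Φ, matExp (t • Q) i c = 1 :=
    fun t i => row_sum_one hQrow t i
  have hstat : ∀ (t : ℝ) (c : Φ), ∑ i : Φ, π i * matExp (t • Q) i c = π c :=
    fun t c => stat_sum hrev hQrow t c
  have heig : ∀ (t : ℝ) (i : Φ), ∑ c : Φ, matExp (t • Q) i c * ν c = Real.exp (-t) * ν i :=
    fun t i => eig_sum hν t i
  have hnorm2 : ∑ i : Φ, π i * (ν i * ν i) = 1 := by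
    rw [← hnorm]
    exact Finset.sum_congr rfl fun i _ => by rw [pow_two]
  have hp2 : 2 ≤ 2 ^ (h + 1) := by
    calc (2:ℕ) = 2 ^ 1 := by norm_num
    _ ≤ 2 ^ (h + 1) := Nat.pow_le_pow_right (by norm_num) (by omega)
  have hph : 1 ≤ 2 ^ h := Nat.one_le_two_pow
  have hph2 : 2 ^ h < 2 ^ (h + 1) := Nat.pow_lt_pow_succ (by norm_num)
  -- the two-point correlation function
  have hC : ∀ ℓ ∈ Finset.Ico (2 ^ h) (2 ^ (h + 1)), ∀ ℓ' ∈ Finset.Ico (2 ^ h) (2 ^ (h + 1)),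
      (∑ x : Fin (2 ^ (h + 1) - 1) → Φ, gtrP h π Q τ x * (ν (x (idx h ℓ)) * ν (x (idx h ℓ')))) =
        Real.exp (-(tdist τ ℓ ℓ')) := by
    intro ℓ hℓ ℓ' hℓ'
    simp only [Finset.mem_Ico] at hℓ hℓ'
    have hT : (∑ x : Fin (2 ^ (h + 1) - 1) → Φ,
        gtrP h π Q τ x * (ν (x (idx h ℓ)) * ν (x (idx h ℓ')))) =
        Tsum h π Q τ (2 ^ (h + 1)) (fun x => ν (x (idx h ℓ)) * ν (x (idx h ℓ'))) := by
      unfold Tsum gtrP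
      rfl
    rw [hT]
    by_cases he : ℓ = ℓ'
    · subst he
      have hL1 : Tsum h π Q τ (2 ^ (h + 1)) (fun x => ν (x (idx h ℓ)) * ν (x (idx h ℓ))) = 1 := by
        calc Tsum h π Q τ (2 ^ (h + 1)) (fun x => ν (x (idx h ℓ)) * ν (x (idx h ℓ)))
            = Tsum h π Q τ (2 ^ (h + 1)) (fun x => (fun i => ν i * ν i) (x (idx h ℓ))) :=
              Tsum_congr fun x => rfl
          _ = (Fintype.card Φ : ℝ) ^ (2 ^ (h + 1) - 2 ^ (h + 1)) * ∑ i : Φ, π i * (ν i * ν i) :=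
              L1 π Q τ hcard hrow hstat _ hp2 (le_refl _) ℓ (by omega) (by omega) (fun i => ν i * ν i)
          _ = 1 := by rw [Nat.sub_self, pow_zero, hnorm2, one_mul]
      rw [hL1, tdist_self', neg_zero, Real.exp_zero]
    · have hML := ML π Q τ ν hcard hrow hstat heig hnorm2 (2 ^ (h + 1)) hp2 (le_refl _)
        ℓ ℓ' (by omega) (by omega) (by omega) (by omega) he
      rw [hML, Nat.sub_self, pow_zero, one_mul]
  -- expand the square and swap sums
  have hsq : ∀ x : Fin (2 ^ (h + 1) - 1) → Φ,
      gtrP h π Q τ x * (estS h ν τ Ψ x) ^ 2 =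
      ∑ ℓ ∈ Finset.Ico (2 ^ h) (2 ^ (h + 1)), ∑ ℓ' ∈ Finset.Ico (2 ^ h) (2 ^ (h + 1)),
        gtrP h π Q τ x *
          ((Ψ ℓ * ν (x (idx h ℓ)) * Real.exp (pathSum τ 1 ℓ)) *
            (Ψ ℓ' * ν (x (idx h ℓ')) * Real.exp (pathSum τ 1 ℓ'))) := by
    intro x
    rw [pow_two]
    unfold estS
    rw [Finset.sum_mul_sum, Finset.mul_sum]
    exact Finset.sum_congr rfl fun ℓ _ => by rw [Finset.mul_sum]
  rw [Finset.sum_congr rfl fun x _ => hsq x, Finset.sum_comm,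
    Finset.sum_congr rfl fun ℓ _ => Finset.sum_comm]
  have hterm : ∀ ℓ ∈ Finset.Ico (2 ^ h) (2 ^ (h + 1)), ∀ ℓ' ∈ Finset.Ico (2 ^ h) (2 ^ (h + 1)),
      (∑ x : Fin (2 ^ (h + 1) - 1) → Φ, gtrP h π Q τ x *
        ((Ψ ℓ * ν (x (idx h ℓ)) * Real.exp (pathSum τ 1 ℓ)) *
          (Ψ ℓ' * ν (x (idx h ℓ')) * Real.exp (pathSum τ 1 ℓ')))) =
      Ψ ℓ * Ψ ℓ' * Real.exp (2 * pathSum τ 1 (lca ℓ ℓ')) := by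
    intro ℓ hℓ ℓ' hℓ'
    have hCll := hC ℓ hℓ ℓ' hℓ'
    simp only [Finset.mem_Ico] at hℓ hℓ'
    obtain ⟨m, hm, hma, hmb, _⟩ := lca_spec h ℓ ℓ' hℓ.1 hℓ.2 hℓ'.1 hℓ'.2
    have hc1 : 1 ≤ lca ℓ ℓ' := by
      rw [← hma]
      have h1 : 2 ^ h / 2 ^ m ≤ ℓ / 2 ^ m := Nat.div_le_div_right hℓ.1
      rw [Nat.pow_div hm (by norm_num)] at h1
      have h2 : (1:ℕ) ≤ 2 ^ (h - m) := Nat.one_le_two_pow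
      omega
    have hancl : isAnc (lca ℓ ℓ') ℓ := (isAnc_iff_div hc1 ℓ).2 ⟨m, hma⟩
    have hancl' : isAnc (lca ℓ ℓ') ℓ' := (isAnc_iff_div hc1 ℓ').2 ⟨m, hmb⟩
    have hchain := pathSum_chain τ hc1 ℓ hancl
    have hchain' := pathSum_chain τ hc1 ℓ' hancl'
    have htd := tdist_eq_pathSum τ h ℓ ℓ' hℓ.1 hℓ.2 hℓ'.1 hℓ'.2
    have harg : Real.exp (-(tdist τ ℓ ℓ')) *
        (Real.exp (pathSum τ 1 ℓ) * Real.exp (pathSum τ 1 ℓ')) =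
        Real.exp (2 * pathSum τ 1 (lca ℓ ℓ')) := by
      rw [← Real.exp_add, ← Real.exp_add]
      congr 1
      rw [htd, hchain, hchain']
      ring
    calc (∑ x : Fin (2 ^ (h + 1) - 1) → Φ, gtrP h π Q τ x *
          ((Ψ ℓ * ν (x (idx h ℓ)) * Real.exp (pathSum τ 1 ℓ)) *
            (Ψ ℓ' * ν (x (idx h ℓ')) * Real.exp (pathSum τ 1 ℓ'))))
        = (∑ x : Fin (2 ^ (h + 1) - 1) → Φ, gtrP h π Q τ x *
            (ν (x (idx h ℓ)) * ν (x (idx h ℓ')))) *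
          (Ψ ℓ * Ψ ℓ' * (Real.exp (pathSum τ 1 ℓ) * Real.exp (pathSum τ 1 ℓ'))) := by
          rw [Finset.sum_mul]
          exact Finset.sum_congr rfl fun x _ => by ring
      _ = Real.exp (-(tdist τ ℓ ℓ')) *
          (Ψ ℓ * Ψ ℓ' * (Real.exp (pathSum τ 1 ℓ) * Real.exp (pathSum τ 1 ℓ'))) := by
          rw [hCll]
      _ = Ψ ℓ * Ψ ℓ' * (Real.exp (-(tdist τ ℓ ℓ')) *
          (Real.exp (pathSum τ 1 ℓ) * Real.exp (pathSum τ 1 ℓ'))) := by ring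
      _ = Ψ ℓ * Ψ ℓ' * Real.exp (2 * pathSum τ 1 (lca ℓ ℓ')) := by rw [harg]
  rw [Finset.sum_congr rfl fun ℓ hℓ => Finset.sum_congr rfl fun ℓ' hℓ' => hterm ℓ hℓ ℓ' hℓ']
  exact step3 τ Ψ hΨ1 hΨflow
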